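/- Let n ≥ 3 be an integer. Suppose h₁₁, h_{1i} (i = 2, …, n), and h_{ij} = h_{ji} (i, j = 2, …, n), all twice differentiable functions on (0,∞), satisfy the system: (I) r²·(r²h₁₁)'' + n·r·(r²h₁₁)' − 2(n−1)·(r²h₁₁) = 0; (II) r²·h_{1i}'' + n·r·h_{1i}' − n·h_{1i} = 0; (III) r²·(r^{−2}h_{ij})'' + n·r·(r^{−2}h_{ij})' − 2·δ_{ij}·Σ_{k=2}^n r^{−2}h_{kk} = 0. If the bounds r²·|h₁₁(r)| ≤ r^{0.1}, |h_{1i}(r)| ≤ r^{0.1}, and r^{−2}·|h_{ij}(r)| ≤ r^{0.1} hold for all r > 0 (or alternatively the bounds with r^{0.1} replaced by r^{−0.1} hold for all r > 0), then all the functions h₁₁, h_{1i}, h_{ij} vanish identically. -/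

import Mathlib

open Real Filter Set Topology


lemma cusp_zero_of_bound (X : ℝ) (f : ℝ → ℝ) (hf : Tendsto f atTop (𝓝 0))
    (hX : ∀ t > (0:ℝ), |X| ≤ f t) : X = 0 := by
  have h1 : |X| ≤ 0 :=
    ge_of_tendsto hf ((eventually_gt_atTop 0).mono fun t ht => hX t ht)
  exact abs_nonpos_iff.mp h1

lemma cusp_tendsto_rpow_of_neg {e : ℝ} (he : e < 0) :
    Tendsto (fun t : ℝ => t ^ e) atTop (𝓝 0) := by
  have h := tendsto_rpow_neg_atTop (y := -e) (by linarith)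
  simpa using h

lemma cusp_bound_neg (X C1 C2 d1 d2 : ℝ) (h1 : d1 < 0) (h2 : d2 < 0)
    (h : ∀ r > (0:ℝ), |X| ≤ C1 * r ^ d1 + C2 * r ^ d2) : X = 0 := by
  apply cusp_zero_of_bound X (fun t => C1 * t ^ d1 + C2 * t ^ d2) ?_ h
  have t1 : Tendsto (fun t : ℝ => C1 * t ^ d1) atTop (𝓝 (C1 * 0)) :=
    (cusp_tendsto_rpow_of_neg h1).const_mul C1
  have t2 : Tendsto (fun t : ℝ => C2 * t ^ d2) atTop (𝓝 (C2 * 0)) :=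
    (cusp_tendsto_rpow_of_neg h2).const_mul C2
  simpa using t1.add t2

lemma cusp_bound_pos (X C1 C2 d1 d2 : ℝ) (h1 : 0 < d1) (h2 : 0 < d2)
    (h : ∀ r > (0:ℝ), |X| ≤ C1 * r ^ d1 + C2 * r ^ d2) : X = 0 := by
  apply cusp_bound_neg X C1 C2 (-d1) (-d2) (by linarith) (by linarith)
  intro t ht
  have h0 := h t⁻¹ (inv_pos.mpr ht)
  rwa [Real.inv_rpow ht.le, Real.inv_rpow ht.le, ← Real.rpow_neg ht.le,
    ← Real.rpow_neg ht.le] at h0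

lemma cusp_step_div (X Y Z r e f g : ℝ) (hr : 0 < r)
    (h : X * r ^ e ≤ Y * r ^ f + Z * r ^ g) :
    X ≤ Y * r ^ (f - e) + Z * r ^ (g - e) := by
  have hre : (0:ℝ) < r ^ e := Real.rpow_pos_of_pos hr e
  calc X ≤ (Y * r ^ f + Z * r ^ g) / r ^ e := (le_div_iff₀ hre).mpr h
    _ = Y * r ^ (f - e) + Z * r ^ (g - e) := by
        rw [Real.rpow_sub hr, Real.rpow_sub hr]; ring

lemma cusp_tri (x y z : ℝ) (h : |x + y| ≤ z) : |y| ≤ |x| + z := by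
  calc |y| = |(x + y) + -x| := by ring_nf
    _ ≤ |x + y| + |(-x)| := abs_add_le _ _
    _ = |x + y| + |x| := by rw [abs_neg]
    _ ≤ z + |x| := by linarith
    _ = |x| + z := by ring

lemma cusp_abs_mul_rpow (X e r : ℝ) (hr : 0 < r) : |X * r ^ e| = |X| * r ^ e := by
  rw [abs_mul, abs_of_pos (Real.rpow_pos_of_pos hr e)]

lemma cusp_coeff_zero (a b β C A B : ℝ) (hab : a < b) (haβ : a < β) (hbβ : b ≠ β)
    (hbd : ∀ r > (0:ℝ), |A * r ^ a + B * r ^ b| ≤ C * r ^ β) : A = 0 ∧ B = 0 := by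
  rcases lt_or_gt_of_ne hbβ with hlt | hgt
  · -- b < β : kill A first (exponents positive relative to a), then B
    have hA : A = 0 := by
      apply cusp_bound_pos A |B| C (b - a) (β - a) (by linarith) (by linarith)
      intro r hr
      have h0 := hbd r hr
      rw [add_comm (A * r ^ a) (B * r ^ b)] at h0
      have h1 := cusp_tri (B * r ^ b) (A * r ^ a) (C * r ^ β) h0
      rw [cusp_abs_mul_rpow _ _ _ hr, cusp_abs_mul_rpow _ _ _ hr] at h1
      exact cusp_step_div |A| |B| C r a b β hr (by linarith)
    have hB : B = 0 := by
      apply cusp_bound_pos B C 0 (β - b) (β - b) (by linarith) (by linarith)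
      intro r hr
      have h0 := hbd r hr
      rw [hA, zero_mul, zero_add, cusp_abs_mul_rpow _ _ _ hr] at h0
      have h2 := cusp_step_div |B| C 0 r b β β hr (by
        rw [zero_mul, add_zero]; exact h0)
      simpa using h2
    exact ⟨hA, hB⟩
  · -- β < b : kill B first (negative exponents), then A
    have hB : B = 0 := by
      apply cusp_bound_neg B |A| C (a - b) (β - b) (by linarith) (by linarith)
      intro r hr
      have h0 := hbd r hr
      have h1 := cusp_tri (A * r ^ a) (B * r ^ b) (C * r ^ β) h0
      rw [cusp_abs_mul_rpow _ _ _ hr, cusp_abs_mul_rpow _ _ _ hr] at h1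
      exact cusp_step_div |B| |A| C r b a β hr (by linarith)
    have hA : A = 0 := by
      apply cusp_bound_pos A C 0 (β - a) (β - a) (by linarith) (by linarith)
      intro r hr
      have h0 := hbd r hr
      rw [hB, zero_mul, add_zero, cusp_abs_mul_rpow _ _ _ hr] at h0
      have h2 := cusp_step_div |A| C 0 r a β β hr (by
        rw [zero_mul, add_zero]; exact h0)
      simpa using h2
    exact ⟨hA, hB⟩


lemma cusp_const_on_pos (f : ℝ → ℝ) (hf : ∀ r > (0:ℝ), HasDerivAt f 0 r) :
    ∀ r > (0:ℝ), f r = f 1 := by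
  have key : ∀ p q : ℝ, 0 < p → p ≤ q → f q = f p := by
    intro p q hp hpq
    have hcont : ContinuousOn f (Set.Icc p q) := fun x hx =>
      ((hf x (lt_of_lt_of_le hp hx.1)).continuousAt).continuousWithinAt
    have hderiv : ∀ x ∈ Set.Ico p q, HasDerivWithinAt f 0 (Set.Ici x) x := fun x hx =>
      (hf x (lt_of_lt_of_le hp hx.1)).hasDerivWithinAt
    exact constant_of_has_deriv_right_zero hcont hderiv q (Set.right_mem_Icc.2 hpq)
  intro r hr
  rcases le_total r 1 with hle | hle
  · exact (key r 1 hr hle).symm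
  · exact key 1 r one_pos hle

lemma cusp_euler_solve (nR c a b : ℝ) (hab : a ≠ b)
    (hsum : a + b = 1 - nR) (hprod : a * b = c)
    (u u' u'' : ℝ → ℝ)
    (hd1 : ∀ r > (0:ℝ), HasDerivAt u (u' r) r)
    (hd2 : ∀ r > (0:ℝ), HasDerivAt u' (u'' r) r)
    (heq : ∀ r > (0:ℝ), r ^ 2 * u'' r + nR * r * u' r + c * u r = 0) :
    ∃ A B : ℝ, ∀ r > (0:ℝ), u r = A * r ^ a + B * r ^ b := by
  set v : ℝ → ℝ := fun r => r * u' r - b * u r with hv_def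
  have hv : ∀ r > (0:ℝ), HasDerivAt v (u' r + r * u'' r - b * u' r) r := by
    intro r hr
    have h1 : HasDerivAt (fun s => s * u' s) (1 * u' r + r * u'' r) r :=
      (hasDerivAt_id r).mul (hd2 r hr)
    have h2 := (hd1 r hr).const_mul b
    simpa [one_mul] using h1.fun_sub h2
  have hkey : ∀ r > (0:ℝ), r * (u' r + r * u'' r - b * u' r) = a * v r := by
    intro r hr
    simp only [hv_def]
    linear_combination heq r hr - (r * u' r) * hsum + (u r) * hprod
  -- first integration : v r = K r^a
  have hφ : ∀ r > (0:ℝ), HasDerivAt (fun s => s ^ (-a) * v s) 0 r := by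
    intro r hr
    have hp : HasDerivAt (fun s : ℝ => s ^ (-a)) (-a * r ^ (-a - 1)) r :=
      Real.hasDerivAt_rpow_const (Or.inl (ne_of_gt hr))
    have hm := hp.fun_mul (hv r hr)
    refine hm.congr_deriv (Eq.symm ?_)
    have e1 : r ^ (-a - 1) = r ^ (-a) / r := by
      rw [Real.rpow_sub hr, Real.rpow_one]
    have hk := hkey r hr
    simp only [hv_def] at hk
    rw [e1]
    field_simp
    linear_combination (-(r ^ (-a))) * hk
  have hφc := cusp_const_on_pos _ hφ
  have hvK : ∀ r > (0:ℝ), v r = v 1 * r ^ a := by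
    intro r hr
    have hcc := hφc r hr
    rw [Real.one_rpow, one_mul] at hcc
    have hrpow : r ^ (-a) * r ^ a = 1 := by
      rw [← Real.rpow_add hr]; simp
    calc v r = v r * (r ^ (-a) * r ^ a) := by rw [hrpow, mul_one]
      _ = (r ^ (-a) * v r) * r ^ a := by ring
      _ = v 1 * r ^ a := by rw [hcc]
  obtain ⟨K, hvK⟩ : ∃ K : ℝ, ∀ r > (0:ℝ), v r = K * r ^ a := ⟨v 1, hvK⟩
  have hab' : a - b ≠ 0 := sub_ne_zero.mpr hab
  -- second integration
  have hψ : ∀ r > (0:ℝ),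
      HasDerivAt (fun s => s ^ (-b) * u s - K / (a - b) * s ^ (a - b)) 0 r := by
    intro r hr
    have hp : HasDerivAt (fun s : ℝ => s ^ (-b)) (-b * r ^ (-b - 1)) r :=
      Real.hasDerivAt_rpow_const (Or.inl (ne_of_gt hr))
    have hq : HasDerivAt (fun s : ℝ => s ^ (a - b)) ((a - b) * r ^ (a - b - 1)) r :=
      Real.hasDerivAt_rpow_const (Or.inl (ne_of_gt hr))
    have hm := (hp.fun_mul (hd1 r hr)).fun_sub (hq.const_mul (K / (a - b)))
    refine hm.congr_deriv (Eq.symm ?_)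
    have hvr : r * u' r - b * u r = K * r ^ a := hvK r hr
    have e1 : r ^ (-b) = r ^ (-b - 1) * r := by
      rw [← Real.rpow_add_one (ne_of_gt hr) (-b - 1)]; ring_nf
    have e2 : r ^ (a - b - 1) = r ^ (-b - 1) * r ^ a := by
      rw [← Real.rpow_add hr]; ring_nf
    rw [e1, e2]
    field_simp
    linear_combination (-(r ^ (-b - 1))) * hvr
  have hψc := cusp_const_on_pos _ hψ
  refine ⟨K / (a - b), u 1 - K / (a - b), ?_⟩
  intro r hr
  have hcc := hψc r hr
  rw [Real.one_rpow, Real.one_rpow, one_mul] at hcc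
  have h1 : r ^ (-b) * r ^ b = 1 := by rw [← Real.rpow_add hr]; simp
  have h2 : r ^ (a - b) * r ^ b = r ^ a := by
    rw [← Real.rpow_add hr]; ring_nf
  calc u r = (r ^ (-b) * u r) * r ^ b := by
        rw [mul_comm (r ^ (-b)) (u r), mul_assoc, h1, mul_one]
    _ = (u 1 - K / (a - b) + K / (a - b) * r ^ (a - b)) * r ^ b := by
        rw [show r ^ (-b) * u r = u 1 - K / (a - b) + K / (a - b) * r ^ (a - b) by
          linarith [hcc]]
    _ = K / (a - b) * (r ^ (a - b) * r ^ b) + (u 1 - K / (a - b)) * r ^ b := by ring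
    _ = K / (a - b) * r ^ a + (u 1 - K / (a - b)) * r ^ b := by rw [h2]

lemma cusp_euler_vanish (nR c β C : ℝ)
    (hdisc : 0 < (nR - 1) ^ 2 - 4 * c)
    (hβ1 : (1 - nR) / 2 ≤ β)
    (hβ2 : β ^ 2 + (nR - 1) * β + c ≠ 0)
    (u u' u'' : ℝ → ℝ)
    (hd1 : ∀ r > (0:ℝ), HasDerivAt u (u' r) r)
    (hd2 : ∀ r > (0:ℝ), HasDerivAt u' (u'' r) r)
    (heq : ∀ r > (0:ℝ), r ^ 2 * u'' r + nR * r * u' r + c * u r = 0)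
    (hbd : ∀ r > (0:ℝ), |u r| ≤ C * r ^ β) :
    ∀ r > (0:ℝ), u r = 0 := by
  set s := Real.sqrt ((nR - 1) ^ 2 - 4 * c) with hs_def
  have hs2 : s ^ 2 = (nR - 1) ^ 2 - 4 * c := Real.sq_sqrt hdisc.le
  have hs : 0 < s := Real.sqrt_pos.mpr hdisc
  set a := ((1 - nR) - s) / 2 with ha_def
  set b := ((1 - nR) + s) / 2 with hb_def
  have hab : a < b := by rw [ha_def, hb_def]; linarith
  have hsum : a + b = 1 - nR := by rw [ha_def, hb_def]; ring
  have hprod : a * b = c := by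
    rw [ha_def, hb_def]; linear_combination (-1/4 : ℝ) * hs2
  have haβ : a < β := by
    rw [ha_def]; linarith
  have hbβ : b ≠ β := by
    intro hbe
    have hroot : b ^ 2 + (nR - 1) * b + c = 0 := by
      linear_combination b * hsum - hprod
    rw [hbe] at hroot
    exact hβ2 hroot
  obtain ⟨A, B, hAB⟩ := cusp_euler_solve nR c a b (ne_of_lt hab) hsum hprod
    u u' u'' hd1 hd2 heq
  obtain ⟨hA, hB⟩ := cusp_coeff_zero a b β C A B hab haβ hbβ
    (fun r hr => by rw [← hAB r hr]; exact hbd r hr)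
  intro r hr
  rw [hAB r hr, hA, hB]; ring

/-- **Vanishing of cusp Einstein variations with strict one-sided growth bounds.**
An `ℝ^{n-1}`-invariant solution of the linearized Einstein equation on the hyperbolic cusp
(system (I)-(III) for `h₁₁`, `h_{1i}`, `h_{ij}`) satisfying `|h| ≤ r^{0.1}` for all `r > 0`,
or alternatively `|h| ≤ r^{-0.1}` for all `r > 0`, vanishes identically. -/
theorem cusp_einstein_variation_vanishes (n : ℕ) (hn : 3 ≤ n)
    (h11 : ℝ → ℝ) (h1 : Fin (n - 1) → ℝ → ℝ) (h : Fin (n - 1) → Fin (n - 1) → ℝ → ℝ)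
    (hsym : ∀ i j, h i j = h j i)
    -- (I): the equation for r² h₁₁
    (F' F'' : ℝ → ℝ)
    (hF1 : ∀ r > (0 : ℝ), HasDerivAt (fun s => s ^ 2 * h11 s) (F' r) r)
    (hF2 : ∀ r > (0 : ℝ), HasDerivAt F' (F'' r) r)
    (hI : ∀ r > (0 : ℝ),
      r ^ 2 * F'' r + (n : ℝ) * r * F' r - 2 * ((n : ℝ) - 1) * (r ^ 2 * h11 r) = 0)
    -- (II): the equations for h_{1i}
    (h1' h1'' : Fin (n - 1) → ℝ → ℝ)
    (hd1 : ∀ i, ∀ r > (0 : ℝ), HasDerivAt (h1 i) (h1' i r) r)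
    (hd2 : ∀ i, ∀ r > (0 : ℝ), HasDerivAt (h1' i) (h1'' i r) r)
    (hII : ∀ i, ∀ r > (0 : ℝ),
      r ^ 2 * h1'' i r + (n : ℝ) * r * h1' i r - (n : ℝ) * h1 i r = 0)
    -- (III): the equations for r^{-2} h_{ij}
    (G' G'' : Fin (n - 1) → Fin (n - 1) → ℝ → ℝ)
    (hG1 : ∀ i j, ∀ r > (0 : ℝ), HasDerivAt (fun s => h i j s / s ^ 2) (G' i j r) r)
    (hG2 : ∀ i j, ∀ r > (0 : ℝ), HasDerivAt (G' i j) (G'' i j r) r)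
    (hIII : ∀ i j, ∀ r > (0 : ℝ),
      r ^ 2 * G'' i j r + (n : ℝ) * r * G' i j r
        - 2 * (if i = j then (1 : ℝ) else 0) * (∑ k, h k k r / r ^ 2) = 0)
    -- growth bounds: either |h| ≤ r^{0.1} everywhere, or |h| ≤ r^{-0.1} everywhere
    (hb : ((∀ r > (0 : ℝ), r ^ 2 * |h11 r| ≤ r ^ (0.1 : ℝ))
            ∧ (∀ i, ∀ r > (0 : ℝ), |h1 i r| ≤ r ^ (0.1 : ℝ))
            ∧ (∀ i j, ∀ r > (0 : ℝ), |h i j r| / r ^ 2 ≤ r ^ (0.1 : ℝ)))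
        ∨ ((∀ r > (0 : ℝ), r ^ 2 * |h11 r| ≤ r ^ (-0.1 : ℝ))
            ∧ (∀ i, ∀ r > (0 : ℝ), |h1 i r| ≤ r ^ (-0.1 : ℝ))
            ∧ (∀ i j, ∀ r > (0 : ℝ), |h i j r| / r ^ 2 ≤ r ^ (-0.1 : ℝ)))) :
    (∀ r > (0 : ℝ), h11 r = 0)
    ∧ (∀ i, ∀ r > (0 : ℝ), h1 i r = 0)
    ∧ (∀ i j, ∀ r > (0 : ℝ), h i j r = 0) := by
  obtain ⟨β, hβ, b11, b1i, bij⟩ :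
      ∃ β : ℝ, (β = (0.1:ℝ) ∨ β = (-0.1:ℝ))
        ∧ (∀ r > (0:ℝ), r ^ 2 * |h11 r| ≤ r ^ β)
        ∧ (∀ i, ∀ r > (0:ℝ), |h1 i r| ≤ r ^ β)
        ∧ (∀ i j, ∀ r > (0:ℝ), |h i j r| / r ^ 2 ≤ r ^ β) := by
    rcases hb with ⟨x, y, z⟩ | ⟨x, y, z⟩
    · exact ⟨0.1, Or.inl rfl, x, y, z⟩
    · exact ⟨-0.1, Or.inr rfl, x, y, z⟩
  have hn' : (3:ℝ) ≤ (n:ℝ) := by exact_mod_cast hn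
  have hβlb : (-0.1:ℝ) ≤ β ∧ β ≤ (0.1:ℝ) := by
    rcases hβ with rfl | rfl <;> norm_num
  have hβ1 : (1 - (n:ℝ)) / 2 ≤ β := by linarith [hβlb.1]
  -- Part 1 : h11
  have part1 : ∀ r > (0:ℝ), h11 r = 0 := by
    have hvan := cusp_euler_vanish (n:ℝ) (-(2*((n:ℝ)-1))) β 1
      (by nlinarith) hβ1
      (by rcases hβ with rfl | rfl <;> · intro hc; nlinarith)
      (fun s => s ^ 2 * h11 s) F' F'' hF1 hF2
      (fun r hr => by linear_combination hI r hr)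
      (fun r hr => by
        calc |r ^ 2 * h11 r| = r ^ 2 * |h11 r| := by
              rw [abs_mul, abs_of_nonneg (sq_nonneg r)]
          _ ≤ r ^ β := b11 r hr
          _ = 1 * r ^ β := (one_mul _).symm)
    intro r hr
    have h0 : r ^ 2 * h11 r = 0 := hvan r hr
    have hr2 : (r:ℝ) ^ 2 ≠ 0 := pow_ne_zero 2 (ne_of_gt hr)
    exact (mul_eq_zero.mp h0).resolve_left hr2
  -- Part 2 : h1 i
  have part2 : ∀ i, ∀ r > (0:ℝ), h1 i r = 0 := by
    intro i
    exact cusp_euler_vanish (n:ℝ) (-(n:ℝ)) β 1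
      (by nlinarith) hβ1
      (by rcases hβ with rfl | rfl <;> · intro hc; nlinarith)
      (h1 i) (h1' i) (h1'' i) (hd1 i) (hd2 i)
      (fun r hr => by linear_combination hII i r hr)
      (fun r hr => by rw [one_mul]; exact b1i i r hr)
  -- Part 3 : h i j
  have part3 : ∀ i j, ∀ r > (0:ℝ), h i j r = 0 := by
    have hcard : ((n:ℝ) - 1) = ((n - 1 : ℕ) : ℝ) := by
      rw [Nat.cast_sub (by omega), Nat.cast_one]
    -- the trace S
    have hSeq : ∀ r > (0:ℝ),
        r ^ 2 * (∑ k, G'' k k r) + (n:ℝ) * r * (∑ k, G' k k r)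
          + (-(2*((n:ℝ)-1))) * (∑ k, h k k r / r ^ 2) = 0 := by
      intro r hr
      have hsum0 : ∑ k : Fin (n-1),
          (r ^ 2 * G'' k k r + (n:ℝ) * r * G' k k r
            - 2 * (∑ j, h j j r / r ^ 2)) = 0 :=
        Finset.sum_eq_zero fun k _ => by simpa using hIII k k r hr
      have hexp : ∑ k : Fin (n-1),
          (r ^ 2 * G'' k k r + (n:ℝ) * r * G' k k r
            - 2 * (∑ j, h j j r / r ^ 2))
          = r ^ 2 * (∑ k, G'' k k r) + (n:ℝ) * r * (∑ k, G' k k r)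
            - ((n:ℝ) - 1) * (2 * (∑ j, h j j r / r ^ 2)) := by
        rw [Finset.sum_sub_distrib, Finset.sum_add_distrib, ← Finset.mul_sum,
          ← Finset.mul_sum, Finset.sum_const, Finset.card_univ, Fintype.card_fin,
          nsmul_eq_mul, ← hcard]
      rw [hexp] at hsum0
      linarith
    have hSbd : ∀ r > (0:ℝ),
        |∑ k : Fin (n-1), h k k r / r ^ 2| ≤ ((n:ℝ) - 1) * r ^ β := by
      intro r hr
      calc |∑ k : Fin (n-1), h k k r / r ^ 2|
          ≤ ∑ k : Fin (n-1), |h k k r / r ^ 2| := Finset.abs_sum_le_sum_abs _ _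
        _ ≤ ∑ _k : Fin (n-1), r ^ β := Finset.sum_le_sum fun k _ => by
              rw [abs_div, abs_of_pos (pow_pos hr 2)]; exact bij k k r hr
        _ = ((n:ℝ) - 1) * r ^ β := by
              rw [Finset.sum_const, Finset.card_univ, Fintype.card_fin,
                nsmul_eq_mul, ← hcard]
    have hS0 : ∀ r > (0:ℝ), (∑ k : Fin (n-1), h k k r / r ^ 2) = 0 :=
      cusp_euler_vanish (n:ℝ) (-(2*((n:ℝ)-1))) β ((n:ℝ)-1)
        (by nlinarith) hβ1
        (by rcases hβ with rfl | rfl <;> · intro hc; nlinarith)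
        (fun r => ∑ k, h k k r / r ^ 2)
        (fun r => ∑ k, G' k k r) (fun r => ∑ k, G'' k k r)
        (fun r hr => HasDerivAt.fun_sum fun k _ => hG1 k k r hr)
        (fun r hr => HasDerivAt.fun_sum fun k _ => hG2 k k r hr)
        hSeq hSbd
    intro i j r hr
    have hvan := cusp_euler_vanish (n:ℝ) 0 β 1
      (by nlinarith) hβ1
      (by rcases hβ with rfl | rfl <;> · intro hc; nlinarith)
      (fun s => h i j s / s ^ 2) (G' i j) (G'' i j) (hG1 i j) (hG2 i j)
      (fun ρ hρ => by
        have h1 := hIII i j ρ hρ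
        rw [hS0 ρ hρ] at h1
        linear_combination h1)
      (fun ρ hρ => by
        rw [one_mul, abs_div, abs_of_pos (pow_pos hρ 2)]
        exact bij i j ρ hρ)
    have h0 : h i j r / r ^ 2 = 0 := hvan r hr
    have hr2 : (r:ℝ) ^ 2 ≠ 0 := pow_ne_zero 2 (ne_of_gt hr)
    exact (div_eq_zero_iff.mp h0).resolve_right hr2
  exact ⟨part1, part2, part3⟩
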